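/- For all positive integers a, b, c, as polynomials in q and t: Σ_{λ ∈ P(min(a,b), c)} s_λ(q, q², ..., q^a) · s_λ(t, tq, ..., tq^{b−1}) = Σ_{π ∈ PP(a,b,c)} q^{|π|} t^{tr(π)}. -/
import Mathlib


attribute [local instance] Classical.propDecidable

noncomputable section

/-- A plane partition with diagram inside the box `[a]×[b]×[c]`, recorded by its
matrix of heights `π i j` (0-indexed), with weakly decreasing rows and columns. -/
def IsPP (a b c : ℕ) (π : Fin a → Fin b → Fin (c+1)) : Prop :=
  (∀ (i i' : Fin a) (j : Fin b), i ≤ i' → π i' j ≤ π i j) ∧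
  (∀ (i : Fin a) (j j' : Fin b), j ≤ j' → π i j' ≤ π i j)

/-- The entry `π_{i,j}` (1-based indices), zero outside the box. -/
def pent {a b c : ℕ} (π : Fin a → Fin b → Fin (c+1)) (i j : ℕ) : ℕ :=
  if h : 1 ≤ i ∧ i ≤ a ∧ 1 ≤ j ∧ j ≤ b then
    (π ⟨i - 1, by omega⟩ ⟨j - 1, by omega⟩ : ℕ) else 0

/-- The volume `|π| = Σ_{i,j} π_{i,j}`. -/
def ppVol {a b c : ℕ} (π : Fin a → Fin b → Fin (c+1)) : ℕ :=
  ∑ i : Fin a, ∑ j : Fin b, (π i j : ℕ)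

/-- The trace `tr(π) = Σ_i π_{i,i}`. -/
def ppTr {a b c : ℕ} (π : Fin a → Fin b → Fin (c+1)) : ℕ :=
  ∑ i ∈ Finset.Icc 1 (min a b), pent π i i

/-- The set of corners of `π`: the triples `(i,j,k) ∈ D(π)` (1-based, so
`1 ≤ k ≤ π_{i,j}`) with `(i+1,j,k) ∉ D(π)` and `(i,j+1,k) ∉ D(π)`. -/
def ppCor {a b c : ℕ} (π : Fin a → Fin b → Fin (c+1)) : Finset (ℕ × ℕ × ℕ) :=
  (Finset.Icc 1 a ×ˢ Finset.Icc 1 b ×ˢ Finset.Icc 1 c).filter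
    (fun p => p.2.2 ≤ pent π p.1 p.2.1 ∧ pent π (p.1 + 1) p.2.1 < p.2.2 ∧
      pent π p.1 (p.2.1 + 1) < p.2.2)

/-- The corner-hook volume `|π|_{ch} = Σ_{(i,j,k) ∈ Cor(π)} (i+j-1)`. -/
def ppChVol {a b c : ℕ} (π : Fin a → Fin b → Fin (c+1)) : ℕ :=
  ∑ p ∈ ppCor π, (p.1 + p.2.1 - 1)

/-- The finite set `PP(a,b,c)` of plane partitions with diagram in `[a]×[b]×[c]`. -/
def ppBox (a b c : ℕ) : Finset (Fin a → Fin b → Fin (c+1)) :=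
  Finset.univ.filter (IsPP a b c)

/-- A column-strict plane partition of shape `μ` with entries in `{1,…,n}`
(the entry of the cell `c` is `T c + 1`): rows weakly decreasing, columns
strictly decreasing. -/
def IsCSPP (μ : YoungDiagram) (n : ℕ) (T : μ.cells → Fin n) : Prop :=
  (∀ c c' : μ.cells, (c : ℕ × ℕ).1 = (c' : ℕ × ℕ).1 → (c : ℕ × ℕ).2 ≤ (c' : ℕ × ℕ).2 →
      T c' ≤ T c) ∧
  (∀ c c' : μ.cells, (c : ℕ × ℕ).2 = (c' : ℕ × ℕ).2 → (c : ℕ × ℕ).1 < (c' : ℕ × ℕ).1 →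
      T c' < T c)

/-- The Schur polynomial `s_μ(x_1,…,x_n)`, as the generating function of
column-strict plane partitions of shape `μ` with entries in `{1,…,n}`. -/
def schur {R : Type*} [CommSemiring R] (n : ℕ) (μ : YoungDiagram) (x : ℕ → R) : R :=
  ∑ T ∈ Finset.univ.filter (IsCSPP μ n), ∏ c : μ.cells, x ((T c : ℕ) + 1)

namespace S13
open Finset

/-! ### Counting machinery -/

def cnt (g : ℕ → ℕ) (N v : ℕ) : ℕ := ((Finset.Icc 1 N).filter fun j => v ≤ g j).card

lemma cnt_le (g : ℕ → ℕ) (N v : ℕ) : cnt g N v ≤ N := by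
  have h := Finset.card_filter_le (Icc 1 N) (fun j => v ≤ g j)
  simpa [cnt, Nat.card_Icc] using h

lemma cnt_anti (g : ℕ → ℕ) (N : ℕ) {v v' : ℕ} (h : v ≤ v') : cnt g N v' ≤ cnt g N v := by
  apply Finset.card_le_card
  intro x hx
  simp only [mem_filter] at hx ⊢
  exact ⟨hx.1, le_trans h hx.2⟩

lemma cnt_le_cnt {g g' : ℕ → ℕ} {N v v' : ℕ}
    (h : ∀ j, 1 ≤ j → j ≤ N → v ≤ g j → v' ≤ g' j) :
    cnt g N v ≤ cnt g' N v' := by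
  apply Finset.card_le_card
  intro x hx
  simp only [mem_filter, mem_Icc] at hx ⊢
  exact ⟨hx.1, h x hx.1.1 hx.1.2 hx.2⟩

lemma le_cnt_iff {g : ℕ → ℕ} (hg : ∀ ⦃j j'⦄, 1 ≤ j → j ≤ j' → g j' ≤ g j)
    {j N v : ℕ} (hj : 1 ≤ j) (hjN : j ≤ N) : j ≤ cnt g N v ↔ v ≤ g j := by
  constructor
  · intro h
    by_contra hv
    push_neg at hv
    have hsub : (Icc 1 N).filter (fun j' => v ≤ g j') ⊆ Icc 1 (j-1) := by
      intro x hx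
      simp only [mem_filter, mem_Icc] at hx ⊢
      refine ⟨hx.1.1, ?_⟩
      by_contra hxj
      push_neg at hxj
      have := hg hj (by omega : j ≤ x)
      omega
    have hcard := Finset.card_le_card hsub
    rw [Nat.card_Icc] at hcard
    unfold cnt at h
    omega
  · intro h
    have hsub : Icc 1 j ⊆ (Icc 1 N).filter (fun j' => v ≤ g j') := by
      intro x hx
      simp only [mem_Icc] at hx
      simp only [mem_filter, mem_Icc]
      exact ⟨⟨hx.1, le_trans hx.2 hjN⟩, le_trans h (hg hx.1 hx.2)⟩
    have hcard := Finset.card_le_card hsub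
    rw [Nat.card_Icc] at hcard
    unfold cnt
    omega

lemma cnt_congr {g g' : ℕ → ℕ} {N v : ℕ} (h : ∀ j, 1 ≤ j → j ≤ N → g j = g' j) :
    cnt g N v = cnt g' N v := by
  unfold cnt
  congr 1
  apply Finset.filter_congr
  intro x hx
  simp only [mem_Icc] at hx
  rw [h x hx.1 hx.2]

lemma cnt_cnt {g : ℕ → ℕ} (hg : ∀ ⦃j j'⦄, 1 ≤ j → j ≤ j' → g j' ≤ g j)
    {N M j : ℕ} (hj : 1 ≤ j) (hjN : j ≤ N) (hM : g j ≤ M) :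
    cnt (fun v => cnt g N v) M j = g j := by
  unfold cnt
  rw [Finset.filter_congr (fun v _ => by
    rw [show (j ≤ (Icc 1 N |>.filter fun i => v ≤ g i).card) = (j ≤ cnt g N v) from rfl,
      le_cnt_iff hg hj hjN])]
  have hset : (Icc 1 M).filter (fun v => v ≤ g j) = Icc 1 (g j) := by
    ext x
    simp only [mem_filter, mem_Icc]
    omega
  rw [hset, Nat.card_Icc]; omega

lemma sum_cnt {g : ℕ → ℕ} {N M : ℕ} (hgM : ∀ j, 1 ≤ j → j ≤ N → g j ≤ M) :
    ∑ v ∈ Icc 1 M, cnt g N v = ∑ j ∈ Icc 1 N, g j := by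
  unfold cnt
  have h1 : ∀ v, ((Icc 1 N).filter fun j => v ≤ g j).card
      = ∑ j ∈ Icc 1 N, if v ≤ g j then 1 else 0 := fun v => Finset.card_filter _ _
  simp_rw [h1]
  rw [Finset.sum_comm]
  apply Finset.sum_congr rfl
  intro j hj
  simp only [mem_Icc] at hj
  rw [← Finset.card_filter]
  have hset : (Icc 1 M).filter (fun v => v ≤ g j) = Icc 1 (g j) := by
    ext x
    have := hgM j hj.1 hj.2
    simp only [mem_filter, mem_Icc]
    omega
  rw [hset, Nat.card_Icc]; omega

/-! ### pent lemmas -/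

lemma pent_le {p q n : ℕ} (M : Fin p → Fin q → Fin (n+1)) (i j : ℕ) : pent M i j ≤ n := by
  unfold pent
  split
  · exact Fin.is_le _
  · exact Nat.zero_le _

lemma pent_range {p q n : ℕ} {M : Fin p → Fin q → Fin (n+1)} {i j : ℕ}
    (h : pent M i j ≠ 0) : 1 ≤ i ∧ i ≤ p ∧ 1 ≤ j ∧ j ≤ q := by
  unfold pent at h
  split at h
  · assumption
  · exact absurd rfl h

lemma pent_zero_out {p q n : ℕ} (M : Fin p → Fin q → Fin (n+1)) {i j : ℕ}
    (h : ¬(1 ≤ i ∧ i ≤ p ∧ 1 ≤ j ∧ j ≤ q)) : pent M i j = 0 := dif_neg h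

lemma pent_mk {p q n : ℕ} (M : Fin p → Fin q → Fin (n+1)) (i : Fin p) (j : Fin q) :
    pent M ((i : ℕ)+1) ((j : ℕ)+1) = M i j := by
  unfold pent
  rw [dif_pos ⟨by omega, by omega, by omega, by omega⟩]
  congr 1 <;> exact Fin.ext (by simp)


lemma pent_eq {p q n : ℕ} (M : Fin p → Fin q → Fin (n+1)) {i j : ℕ}
    (h1 : 1 ≤ i) (h2 : i ≤ p) (h3 : 1 ≤ j) (h4 : j ≤ q) :
    pent M i j = M ⟨i-1, by omega⟩ ⟨j-1, by omega⟩ := by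
  unfold pent
  rw [dif_pos ⟨h1, h2, h3, h4⟩]

lemma pent_anti_r {a b c : ℕ} {π : Fin a → Fin b → Fin (c+1)} (hπ : IsPP a b c π)
    {i i' j : ℕ} (h1 : 1 ≤ i) (h : i ≤ i') : pent π i' j ≤ pent π i j := by
  by_cases hz : pent π i' j = 0
  · omega
  · obtain ⟨_, hi'a, hj1, hjb⟩ := pent_range hz
    rw [pent_eq π (by omega) (by omega) hj1 hjb, pent_eq π h1 (by omega) hj1 hjb]
    exact hπ.1 ⟨i-1, by omega⟩ ⟨i'-1, by omega⟩ ⟨j-1, by omega⟩ (by rw [Fin.mk_le_mk]; omega)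

lemma pent_anti_c {a b c : ℕ} {π : Fin a → Fin b → Fin (c+1)} (hπ : IsPP a b c π)
    {i j j' : ℕ} (h1 : 1 ≤ j) (h : j ≤ j') : pent π i j' ≤ pent π i j := by
  by_cases hz : pent π i j' = 0
  · omega
  · obtain ⟨hi1, hia, _, hj'b⟩ := pent_range hz
    rw [pent_eq π hi1 hia (by omega) (by omega), pent_eq π hi1 hia h1 (by omega)]
    exact hπ.2 ⟨i-1, by omega⟩ ⟨j-1, by omega⟩ ⟨j'-1, by omega⟩ (by rw [Fin.mk_le_mk]; omega)

/-! ### Tableaux encoded as matrices -/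

/-- A column-strict tableau encoded as a matrix: rows weakly decreasing,
columns strictly decreasing on the support. -/
def Tab {p q n : ℕ} (M : Fin p → Fin q → Fin (n+1)) : Prop :=
  (∀ i j j', 1 ≤ j → j ≤ j' → pent M i j' ≤ pent M i j) ∧
  (∀ i i' j, 1 ≤ i → i < i' → pent M i' j ≠ 0 → pent M i' j < pent M i j)

lemma tab_chain {p q n : ℕ} {M : Fin p → Fin q → Fin (n+1)} (hM : Tab M)
    {i i' j : ℕ} (h1 : 1 ≤ i) (h : i ≤ i') (hz : pent M i' j ≠ 0) :
    pent M i' j + (i' - i) ≤ pent M i j := by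
  induction i' , h using Nat.le_induction with
  | base => omega
  | succ k hk ih =>
    have hstep := hM.2 k (k+1) j (by omega) (by omega) hz
    have hkz : pent M k j ≠ 0 := by omega
    have := ih hkz
    omega

lemma tab_bound {p q n : ℕ} {M : Fin p → Fin q → Fin (n+1)} (hM : Tab M)
    {i j : ℕ} (h1 : 1 ≤ i) : pent M i j + i ≤ n + 1 ∨ pent M i j = 0 := by
  by_cases hz : pent M i j = 0
  · right; exact hz
  · left
    have := tab_chain hM (le_refl 1) h1 hz
    have := pent_le M 1 j
    omega

/-- rows of the support are initial segments; columns too (support is a lower set). -/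
lemma tab_supp_lower {p q n : ℕ} {M : Fin p → Fin q → Fin (n+1)} (hM : Tab M)
    {i j i₂ j₂ : ℕ} (hi : i₂ ≤ i) (hj : j₂ ≤ j) (h1 : 1 ≤ i₂) (h2 : 1 ≤ j₂)
    (hz : pent M i j ≠ 0) : pent M i₂ j₂ ≠ 0 := by
  have hrow : pent M i j ≤ pent M i j₂ := hM.1 i j₂ j h2 hj
  have hz2 : pent M i j₂ ≠ 0 := by omega
  rcases Nat.eq_or_lt_of_le hi with h | h
  · subst h; exact hz2
  · have := hM.2 i₂ i j₂ h1 h hz2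
    omega

/-! ### The finset of Young diagrams inside the `m × c` box -/

def box (m c : ℕ) : Finset (ℕ × ℕ) := Finset.range m ×ˢ Finset.range c

def SB (m c : ℕ) : Finset YoungDiagram :=
  (((box m c).powerset).filter (fun s : Finset (ℕ × ℕ) => IsLowerSet (s : Set (ℕ × ℕ)))).attach.image
    (fun s => { cells := s.1,
                isLowerSet := by have h := s.2; rw [Finset.mem_filter] at h; exact h.2 })

lemma mem_SB {m c : ℕ} {μ : YoungDiagram} : μ ∈ SB m c ↔ μ.cells ⊆ box m c := by
  constructor
  · intro h
    simp only [SB, Finset.mem_image, Finset.mem_attach, true_and] at h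
    obtain ⟨s, hs⟩ := h
    have := (Finset.mem_filter.mp s.2).1
    rw [← hs]
    exact Finset.mem_powerset.mp this
  · intro h
    simp only [SB, Finset.mem_image]
    refine ⟨⟨μ.cells, Finset.mem_filter.mpr ⟨Finset.mem_powerset.mpr h, μ.isLowerSet⟩⟩,
      Finset.mem_attach _ _, ?_⟩
    rfl

lemma mem_SB_iff_len {m c : ℕ} {μ : YoungDiagram} :
    μ ∈ SB m c ↔ μ.colLen 0 ≤ m ∧ μ.rowLen 0 ≤ c := by
  rw [mem_SB]
  constructor
  · intro h
    constructor
    · by_contra hm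
      push_neg at hm
      have : (m, 0) ∈ μ := YoungDiagram.mem_iff_lt_colLen.mpr hm
      have := h this
      simp [box] at this
    · by_contra hc
      push_neg at hc
      have : (0, c) ∈ μ := YoungDiagram.mem_iff_lt_rowLen.mpr hc
      have := h this
      simp [box] at this
  · rintro ⟨h1, h2⟩ ⟨i, j⟩ hij
    simp only [box, Finset.mem_product, Finset.mem_range]
    have hmem : (i, j) ∈ μ := hij
    constructor
    · have := YoungDiagram.mem_iff_lt_colLen.mp hmem
      have := μ.colLen_anti 0 j (Nat.zero_le _)
      omega
    · have := YoungDiagram.mem_iff_lt_rowLen.mp hmem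
      have := μ.rowLen_anti 0 i (Nat.zero_le _)
      omega

/-- The support of `M` is (the cells of) `μ` (0-based indexing of cells). -/
def SuppIs {p q n : ℕ} (μ : YoungDiagram) (M : Fin p → Fin q → Fin (n+1)) : Prop :=
  ∀ i j : ℕ, (pent M (i+1) (j+1) ≠ 0 ↔ (i, j) ∈ μ)

def SuppEq {p q n n' : ℕ} (M : Fin p → Fin q → Fin (n+1)) (M' : Fin p → Fin q → Fin (n'+1)) : Prop :=
  ∀ i j : ℕ, (pent M i j = 0 ↔ pent M' i j = 0)

/-! ### Lemma A : schur as a sum over matrix tableaux -/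

lemma prod_Icc_one {R : Type*} [CommMonoid R] (f : ℕ → R) (p : ℕ) :
    ∏ i ∈ Icc 1 p, f i = ∏ i ∈ range p, f (i+1) := by
  rw [← Finset.Ico_add_one_right_eq_Icc, Finset.prod_Ico_eq_prod_range]
  simp [add_comm]

lemma sum_Icc_one (f : ℕ → ℕ) (p : ℕ) :
    ∑ i ∈ Icc 1 p, f i = ∑ i ∈ range p, f (i+1) := by
  rw [← Finset.Ico_add_one_right_eq_Icc, Finset.sum_Ico_eq_sum_range]
  simp [add_comm]

def TabOf (m k n : ℕ) (μ : YoungDiagram) : Finset (Fin m → Fin k → Fin (n+1)) :=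
  Finset.univ.filter (fun M => Tab M ∧ SuppIs μ M)

def Fmap (m k n : ℕ) (μ : YoungDiagram) (T : μ.cells → Fin n) : Fin m → Fin k → Fin (n+1) :=
  fun i j => if h : ((i : ℕ), (j : ℕ)) ∈ μ then
    ⟨(T ⟨((i : ℕ), (j : ℕ)), (YoungDiagram.mem_cells _).mpr h⟩ : ℕ) + 1,
      Nat.succ_lt_succ (T _).isLt⟩ else 0

def Gmap (m k n : ℕ) (μ : YoungDiagram) (M : Fin m → Fin k → Fin (n+1)) (hn : 0 < n) :
    μ.cells → Fin n :=
  fun cl => ⟨pent M (cl.1.1+1) (cl.1.2+1) - 1, by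
    have := pent_le M (cl.1.1+1) (cl.1.2+1); omega⟩

lemma pent_Fmap_pos {m k n : ℕ} {μ : YoungDiagram} (hμ : μ ∈ SB m k)
    (T : μ.cells → Fin n) {i j : ℕ} (h : (i, j) ∈ μ) :
    pent (Fmap m k n μ T) (i+1) (j+1)
      = (T ⟨(i, j), (YoungDiagram.mem_cells _).mpr h⟩ : ℕ) + 1 := by
  have hbox := mem_SB.mp hμ ((YoungDiagram.mem_cells _).mpr h)
  simp only [box, Finset.mem_product, Finset.mem_range] at hbox
  rw [pent_eq _ (by omega) (by omega : i+1 ≤ m) (by omega) (by omega : j+1 ≤ k)]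
  simp only [Fmap, Nat.add_sub_cancel]
  rw [dif_pos h]

lemma pent_Fmap_ne {m k n : ℕ} {μ : YoungDiagram} (hμ : μ ∈ SB m k)
    (T : μ.cells → Fin n) (i j : ℕ) :
    pent (Fmap m k n μ T) (i+1) (j+1) ≠ 0 ↔ (i, j) ∈ μ := by
  constructor
  · intro hz
    by_contra h
    obtain ⟨_, him, _, hjk⟩ := pent_range hz
    rw [pent_eq _ (by omega) him (by omega) hjk] at hz
    simp only [Fmap, Nat.add_sub_cancel] at hz
    rw [dif_neg h] at hz
    simp at hz
  · intro h
    rw [pent_Fmap_pos hμ T h]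
    omega

lemma suppIs_Fmap {m k n : ℕ} {μ : YoungDiagram} (hμ : μ ∈ SB m k) (T : μ.cells → Fin n) :
    SuppIs μ (Fmap m k n μ T) := fun i j => pent_Fmap_ne hμ T i j

lemma tab_Fmap {m k n : ℕ} {μ : YoungDiagram} (hμ : μ ∈ SB m k)
    {T : μ.cells → Fin n} (hT : IsCSPP μ n T) : Tab (Fmap m k n μ T) := by
  constructor
  · intro i j j' hj hjj'
    by_cases hz : pent (Fmap m k n μ T) i j' = 0
    · rw [hz]; exact Nat.zero_le _
    · obtain ⟨hi1, _, hj'1, _⟩ := pent_range hz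
      obtain ⟨i₀, rfl⟩ : ∃ t, i = t+1 := ⟨i-1, by omega⟩
      obtain ⟨j₀', rfl⟩ : ∃ t, j' = t+1 := ⟨j'-1, by omega⟩
      obtain ⟨j₀, rfl⟩ : ∃ t, j = t+1 := ⟨j-1, by omega⟩
      have hcell' : (i₀, j₀') ∈ μ := (pent_Fmap_ne hμ T _ _).mp hz
      have hcell : (i₀, j₀) ∈ μ :=
        μ.isLowerSet (Prod.mk_le_mk.mpr ⟨le_refl _, by omega⟩) hcell'
      rw [pent_Fmap_pos hμ T hcell', pent_Fmap_pos hμ T hcell]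
      have := hT.1 ⟨(i₀, j₀), (YoungDiagram.mem_cells _).mpr hcell⟩
        ⟨(i₀, j₀'), (YoungDiagram.mem_cells _).mpr hcell'⟩ rfl (by simp; omega)
      exact Nat.succ_le_succ this
  · intro i i' j h1 hii' hz
    obtain ⟨hi'1, _, hj1, _⟩ := pent_range hz
    obtain ⟨i₀', rfl⟩ : ∃ t, i' = t+1 := ⟨i'-1, by omega⟩
    obtain ⟨i₀, rfl⟩ : ∃ t, i = t+1 := ⟨i-1, by omega⟩
    obtain ⟨j₀, rfl⟩ : ∃ t, j = t+1 := ⟨j-1, by omega⟩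
    have hcell' : (i₀', j₀) ∈ μ := (pent_Fmap_ne hμ T _ _).mp hz
    have hcell : (i₀, j₀) ∈ μ :=
      μ.isLowerSet (Prod.mk_le_mk.mpr ⟨by omega, le_refl _⟩) hcell'
    rw [pent_Fmap_pos hμ T hcell', pent_Fmap_pos hμ T hcell]
    have := hT.2 ⟨(i₀, j₀), (YoungDiagram.mem_cells _).mpr hcell⟩
      ⟨(i₀', j₀), (YoungDiagram.mem_cells _).mpr hcell'⟩ rfl (by simp; omega)
    exact Nat.succ_lt_succ this

lemma cspp_Gmap {m k n : ℕ} {μ : YoungDiagram} {M : Fin m → Fin k → Fin (n+1)} (hn : 0 < n)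
    (hM : Tab M) (hS : SuppIs μ M) : IsCSPP μ n (Gmap m k n μ M hn) := by
  constructor
  · rintro ⟨⟨i, j⟩, hc⟩ ⟨⟨i', j'⟩, hc'⟩ h1 h2
    simp only at h1 h2
    subst h1
    have hz' : pent M (i+1) (j'+1) ≠ 0 := (hS i j').mpr ((YoungDiagram.mem_cells _).mp hc')
    have := hM.1 (i+1) (j+1) (j'+1) (by omega) (by omega)
    show Fin.mk _ _ ≤ Fin.mk _ _
    rw [Fin.mk_le_mk]
    simp only [Gmap]
    omega
  · rintro ⟨⟨i, j⟩, hc⟩ ⟨⟨i', j'⟩, hc'⟩ h1 h2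
    simp only at h1 h2
    subst h1
    have hz' : pent M (i'+1) (j+1) ≠ 0 := (hS i' j).mpr ((YoungDiagram.mem_cells _).mp hc')
    have := hM.2 (i+1) (i'+1) (j+1) (by omega) (by omega) hz'
    show Fin.mk _ _ < Fin.mk _ _
    rw [Fin.mk_lt_mk]
    simp only [Gmap]
    omega

lemma schur_eq_tab {R : Type*} [CommSemiring R] (m k n : ℕ) (hn : 0 < n)
    (μ : YoungDiagram) (hμ : μ ∈ SB m k) (x : ℕ → R) :
    schur n μ x = ∑ M ∈ TabOf m k n μ, ∏ i ∈ Icc 1 m, ∏ j ∈ Icc 1 k,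
      (if pent M i j = 0 then 1 else x (pent M i j)) := by
  unfold schur TabOf
  apply Finset.sum_nbij' (i := Fmap m k n μ) (j := fun M => Gmap m k n μ M hn)
  · intro T hT
    rw [Finset.mem_filter] at hT ⊢
    exact ⟨Finset.mem_univ _, tab_Fmap hμ hT.2, suppIs_Fmap hμ T⟩
  · intro M hM
    rw [Finset.mem_filter] at hM ⊢
    exact ⟨Finset.mem_univ _, cspp_Gmap hn hM.2.1 hM.2.2⟩
  · intro T _
    funext cl
    obtain ⟨⟨i, j⟩, hc⟩ := cl
    apply Fin.ext
    show pent (Fmap m k n μ T) (i+1) (j+1) - 1 = _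
    rw [pent_Fmap_pos hμ T ((YoungDiagram.mem_cells _).mp hc)]
    simp
  · intro M hM
    rw [Finset.mem_filter] at hM
    obtain ⟨_, hTab, hS⟩ := hM
    funext i j
    apply Fin.ext
    by_cases h : (((i : ℕ)), ((j : ℕ))) ∈ μ
    · show (Fmap m k n μ (Gmap m k n μ M hn) i j : ℕ) = M i j
      simp only [Fmap]
      rw [dif_pos h]
      show pent M ((i : ℕ)+1) ((j : ℕ)+1) - 1 + 1 = _
      have hz := (hS i j).mpr h
      rw [pent_mk] at hz ⊢
      omega
    · simp only [Fmap]
      rw [dif_neg h]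
      have hz : pent M ((i : ℕ)+1) ((j : ℕ)+1) = 0 := by
        by_contra hc
        exact h ((hS i j).mp hc)
      rw [pent_mk] at hz
      simp [hz]
  · intro T hT
    rw [Finset.mem_filter] at hT
    set F := Fmap m k n μ T with hF
    set h : ℕ × ℕ → R := fun p =>
      if pent F (p.1+1) (p.2+1) = 0 then 1 else x (pent F (p.1+1) (p.2+1)) with hh
    calc (∏ cl : μ.cells, x ((T cl : ℕ) + 1))
        = ∏ cl ∈ μ.cells.attach, h cl.1 := by
          rw [Finset.univ_eq_attach]
          apply Finset.prod_congr rfl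
          rintro ⟨⟨i, j⟩, hc⟩ _
          have hcell : (i, j) ∈ μ := (YoungDiagram.mem_cells _).mp hc
          simp only [hh]
          rw [if_neg (by rw [pent_Fmap_pos hμ T hcell]; omega),
            pent_Fmap_pos hμ T hcell]
      _ = ∏ p ∈ μ.cells, h p := Finset.prod_attach _ _
      _ = ∏ p ∈ box m k, h p := by
          apply Finset.prod_subset (mem_SB.mp hμ)
          intro p hp hnp
          obtain ⟨i, j⟩ := p
          have hcell : (i, j) ∉ μ := fun hc => hnp ((YoungDiagram.mem_cells _).mpr hc)
          simp only [hh]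
          rw [if_pos]
          by_contra hz
          exact hcell ((pent_Fmap_ne hμ T i j).mp hz)
      _ = ∏ i ∈ range m, ∏ j ∈ range k, h (i, j) := by
          rw [box, Finset.prod_product]
      _ = ∏ i ∈ Icc 1 m, ∏ j ∈ Icc 1 k,
            (if pent F i j = 0 then 1 else x (pent F i j)) := by
          rw [prod_Icc_one (fun i => ∏ j ∈ Icc 1 k, (if pent F i j = 0 then 1 else x (pent F i j))) m]
          apply Finset.prod_congr rfl
          intro i _
          rw [prod_Icc_one (fun j => (if pent F (i+1) j = 0 then 1 else x (pent F (i+1) j))) k]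

/-! ### weights -/

def eSum {p q n : ℕ} (M : Fin p → Fin q → Fin (n+1)) : ℕ :=
  ∑ i ∈ Icc 1 p, ∑ j ∈ Icc 1 q, pent M i j

def sCard {p q n : ℕ} (M : Fin p → Fin q → Fin (n+1)) : ℕ :=
  ∑ i ∈ Icc 1 p, ∑ j ∈ Icc 1 q, min (pent M i j) 1

def rSum {p q n : ℕ} (M : Fin p → Fin q → Fin (n+1)) : ℕ :=
  ∑ i ∈ Icc 1 p, ∑ j ∈ Icc 1 q, (pent M i j - min (pent M i j) 1)

lemma eSum_eq_rSum_add_sCard {p q n : ℕ} (M : Fin p → Fin q → Fin (n+1)) :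
    eSum M = rSum M + sCard M := by
  unfold eSum rSum sCard
  rw [← Finset.sum_add_distrib]
  apply Finset.sum_congr rfl
  intro i _
  rw [← Finset.sum_add_distrib]
  apply Finset.sum_congr rfl
  intro j _
  omega

lemma w1 {p q n : ℕ} (M : Fin p → Fin q → Fin (n+1)) :
    (∏ i ∈ Icc 1 p, ∏ j ∈ Icc 1 q,
      (if pent M i j = 0 then 1 else (MvPolynomial.X 0 : MvPolynomial (Fin 2) ℤ) ^ (pent M i j)))
      = MvPolynomial.X 0 ^ eSum M := by
  have hpt : ∀ i j : ℕ, (if pent M i j = 0 then 1 else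
      (MvPolynomial.X 0 : MvPolynomial (Fin 2) ℤ) ^ (pent M i j))
      = MvPolynomial.X 0 ^ (pent M i j) := by
    intro i j
    split <;> simp_all
  simp_rw [hpt, Finset.prod_pow_eq_pow_sum]
  rfl

lemma w2 {p q n : ℕ} (M : Fin p → Fin q → Fin (n+1)) :
    (∏ i ∈ Icc 1 p, ∏ j ∈ Icc 1 q,
      (if pent M i j = 0 then 1 else
        MvPolynomial.X 1 * (MvPolynomial.X 0 : MvPolynomial (Fin 2) ℤ) ^ (pent M i j - 1)))
      = (MvPolynomial.X 1 : MvPolynomial (Fin 2) ℤ) ^ sCard M * MvPolynomial.X 0 ^ rSum M := by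
  have hpt : ∀ i j : ℕ, (if pent M i j = 0 then 1 else
      MvPolynomial.X 1 * (MvPolynomial.X 0 : MvPolynomial (Fin 2) ℤ) ^ (pent M i j - 1))
      = (MvPolynomial.X 1 : MvPolynomial (Fin 2) ℤ) ^ (min (pent M i j) 1) *
          MvPolynomial.X 0 ^ (pent M i j - min (pent M i j) 1) := by
    intro i j
    by_cases h : pent M i j = 0
    · simp [h]
    · rw [if_neg h]
      have h1 : min (pent M i j) 1 = 1 := by omega
      rw [h1, pow_one]
  simp_rw [hpt, Finset.prod_mul_distrib, Finset.prod_pow_eq_pow_sum]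
  rfl

/-! ### pairs of tableaux with equal support -/

def TabPairs (a b c : ℕ) :
    Finset ((Fin (min a b) → Fin c → Fin (a+1)) × (Fin (min a b) → Fin c → Fin (b+1))) :=
  Finset.univ.filter (fun P => Tab P.1 ∧ Tab P.2 ∧ SuppEq P.1 P.2)

lemma suppIs_suppEq {p q n n' : ℕ} {M : Fin p → Fin q → Fin (n+1)}
    {M' : Fin p → Fin q → Fin (n'+1)} {μ : YoungDiagram}
    (h : SuppIs μ M) (h' : SuppIs μ M') : SuppEq M M' := by
  intro i j
  rcases Nat.eq_zero_or_pos i with hi | hi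
  · subst hi
    constructor <;> intro _ <;> unfold pent <;> rw [dif_neg (by omega)]
  rcases Nat.eq_zero_or_pos j with hj | hj
  · subst hj
    constructor <;> intro _ <;> unfold pent <;> rw [dif_neg (by omega)]
  obtain ⟨i₀, rfl⟩ : ∃ t, i = t+1 := ⟨i-1, by omega⟩
  obtain ⟨j₀, rfl⟩ : ∃ t, j = t+1 := ⟨j-1, by omega⟩
  have e1 := h i₀ j₀
  have e2 := h' i₀ j₀
  rw [← not_iff_not]
  exact e1.trans e2.symm

lemma suppIs_unique {p q n : ℕ} {M : Fin p → Fin q → Fin (n+1)} {μ ν : YoungDiagram}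
    (h : SuppIs μ M) (h' : SuppIs ν M) : μ = ν := by
  apply YoungDiagram.ext
  apply Finset.ext
  rintro ⟨i, j⟩
  rw [YoungDiagram.mem_cells, YoungDiagram.mem_cells, ← h i j, ← h' i j]

lemma shape_exists {m k n : ℕ} {M : Fin m → Fin k → Fin (n+1)} (hM : Tab M) :
    ∃ μ ∈ SB m k, SuppIs μ M := by
  have hlow : IsLowerSet (↑((box m k).filter
      (fun p : ℕ × ℕ => pent M (p.1+1) (p.2+1) ≠ 0)) : Set (ℕ × ℕ)) := by
    rintro ⟨i, j⟩ ⟨i₂, j₂⟩ hle hp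
    simp only [Finset.coe_filter, Set.mem_setOf_eq, box, Finset.mem_product,
      Finset.mem_range] at hp ⊢
    obtain ⟨hij, hz⟩ := hp
    obtain ⟨h1, h2⟩ := Prod.mk_le_mk.mp hle
    have hz2 : pent M (i₂+1) (j₂+1) ≠ 0 :=
      tab_supp_lower hM (by omega) (by omega) (by omega) (by omega) hz
    exact ⟨⟨by omega, by omega⟩, hz2⟩
  refine ⟨⟨(box m k).filter (fun p : ℕ × ℕ => pent M (p.1+1) (p.2+1) ≠ 0), hlow⟩, ?_, ?_⟩
  · rw [mem_SB]
    exact Finset.filter_subset _ _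
  · intro i j
    rw [← YoungDiagram.mem_cells]
    show _ ↔ (i, j) ∈ (box m k).filter _
    rw [Finset.mem_filter]
    constructor
    · intro hz
      obtain ⟨_, him, _, hjk⟩ := pent_range hz
      exact ⟨by simp [box]; omega, hz⟩
    · exact fun h => h.2

lemma tp_decomp (a b c : ℕ) :
    TabPairs a b c = (SB (min a b) c).biUnion
      (fun μ => (TabOf (min a b) c a μ) ×ˢ (TabOf (min a b) c b μ)) := by
  apply Finset.ext
  intro P
  rw [Finset.mem_biUnion]
  constructor
  · intro hP
    rw [TabPairs, Finset.mem_filter] at hP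
    obtain ⟨_, h1, h2, h3⟩ := hP
    obtain ⟨μ, hμ, hS⟩ := shape_exists h1
    refine ⟨μ, hμ, ?_⟩
    rw [Finset.mem_product]
    constructor
    · rw [TabOf, Finset.mem_filter]
      exact ⟨Finset.mem_univ _, h1, hS⟩
    · rw [TabOf, Finset.mem_filter]
      refine ⟨Finset.mem_univ _, h2, ?_⟩
      intro i j
      rw [← hS i j]
      exact (not_congr (h3 (i+1) (j+1))).symm
  · rintro ⟨μ, _, hP⟩
    rw [Finset.mem_product, TabOf, TabOf, Finset.mem_filter, Finset.mem_filter] at hP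
    rw [TabPairs, Finset.mem_filter]
    exact ⟨Finset.mem_univ _, hP.1.2.1, hP.2.2.1, suppIs_suppEq hP.1.2.2 hP.2.2.2⟩

lemma tp_disj (a b c : ℕ) :
    (↑(SB (min a b) c) : Set YoungDiagram).PairwiseDisjoint
      (fun μ => (TabOf (min a b) c a μ) ×ˢ (TabOf (min a b) c b μ)) := by
  intro μ _ ν _ hne
  rw [Function.onFun]
  rw [Finset.disjoint_left]
  intro P hP hP'
  rw [Finset.mem_product, TabOf, TabOf, Finset.mem_filter, Finset.mem_filter] at hP hP'
  exact hne (suppIs_unique hP.1.2.2 hP'.1.2.2)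

/-! ### the left-hand side -/

lemma lhs_eq (a b c : ℕ) (ha : 0 < a) (hb : 0 < b) :
    ∑ᶠ (μ : YoungDiagram) (_ : μ.colLen 0 ≤ min a b ∧ μ.rowLen 0 ≤ c),
        schur a μ (fun i => (MvPolynomial.X 0 : MvPolynomial (Fin 2) ℤ) ^ i) *
          schur b μ (fun j => MvPolynomial.X 1 * MvPolynomial.X 0 ^ (j - 1))
      = ∑ P ∈ TabPairs a b c,
          (MvPolynomial.X 0 : MvPolynomial (Fin 2) ℤ) ^ (eSum P.1) *
            ((MvPolynomial.X 1 : MvPolynomial (Fin 2) ℤ) ^ (sCard P.2) *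
              MvPolynomial.X 0 ^ (rSum P.2)) := by
  have h0 : ∑ᶠ (μ : YoungDiagram) (_ : μ.colLen 0 ≤ min a b ∧ μ.rowLen 0 ≤ c),
        schur a μ (fun i => (MvPolynomial.X 0 : MvPolynomial (Fin 2) ℤ) ^ i) *
          schur b μ (fun j => MvPolynomial.X 1 * MvPolynomial.X 0 ^ (j - 1))
      = ∑ᶠ (μ : YoungDiagram) (_ : μ ∈ (↑(SB (min a b) c) : Set YoungDiagram)),
        schur a μ (fun i => (MvPolynomial.X 0 : MvPolynomial (Fin 2) ℤ) ^ i) *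
          schur b μ (fun j => MvPolynomial.X 1 * MvPolynomial.X 0 ^ (j - 1)) := by
    apply finsum_congr
    intro μ
    have he : (μ.colLen 0 ≤ min a b ∧ μ.rowLen 0 ≤ c)
        = (μ ∈ (↑(SB (min a b) c) : Set YoungDiagram)) := by
      rw [eq_iff_iff]
      rw [Finset.mem_coe, mem_SB_iff_len]
    rw [he]
  rw [h0, finsum_mem_coe_finset]
  rw [tp_decomp a b c, Finset.sum_biUnion (tp_disj a b c)]
  apply Finset.sum_congr rfl
  intro μ hμ
  rw [schur_eq_tab (min a b) c a ha μ hμ, schur_eq_tab (min a b) c b hb μ hμ,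
    Finset.sum_mul_sum, Finset.sum_product]
  apply Finset.sum_congr rfl
  intro M _
  apply Finset.sum_congr rfl
  intro M' _
  rw [← w1 M, ← w2 M']

/-! ### the bijection between pairs of tableaux and plane partitions -/

section Bij

variable {a b c : ℕ}

def toPPval (M : Fin (min a b) → Fin c → Fin (a+1)) (M' : Fin (min a b) → Fin c → Fin (b+1))
    (r s : ℕ) : ℕ :=
  if s ≤ r then cnt (fun j => pent M s j) c (r - s + 1)
  else cnt (fun j => pent M' r j) c (s - r + 1)

def toPP (M : Fin (min a b) → Fin c → Fin (a+1)) (M' : Fin (min a b) → Fin c → Fin (b+1)) :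
    Fin a → Fin b → Fin (c+1) :=
  fun r s => ⟨toPPval M M' ((r : ℕ)+1) ((s : ℕ)+1), by
    unfold toPPval
    split <;> exact Nat.lt_succ_of_le (cnt_le _ _ _)⟩

variable {M : Fin (min a b) → Fin c → Fin (a+1)} {M' : Fin (min a b) → Fin c → Fin (b+1)}

lemma pent_toPP {r s : ℕ} (h1 : 1 ≤ r) (h2 : r ≤ a) (h3 : 1 ≤ s) (h4 : s ≤ b) :
    pent (toPP M M') r s = toPPval M M' r s := by
  rw [pent_eq _ h1 h2 h3 h4]
  show toPPval M M' ((r-1)+1) ((s-1)+1) = _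
  congr 1 <;> omega

lemma toPPval_succ_r (hM' : Tab M') (hE : SuppEq M M') {r s : ℕ}
    (h1 : 1 ≤ r) (h3 : 1 ≤ s) :
    toPPval M M' (r+1) s ≤ toPPval M M' r s := by
  unfold toPPval
  by_cases hs : s ≤ r
  · rw [if_pos (by omega), if_pos hs]
    exact cnt_anti _ _ (by omega)
  · push_neg at hs
    by_cases hs2 : s ≤ r+1
    · have hsr : s = r+1 := by omega
      subst hsr
      rw [if_pos (le_refl _), if_neg (by omega)]
      apply cnt_le_cnt
      intro j hj1 hjc hv
      have hne : pent M (r+1) j ≠ 0 := by omega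
      have hne' : pent M' (r+1) j ≠ 0 := fun h => hne ((hE (r+1) j).mpr h)
      have := hM'.2 r (r+1) j h1 (by omega) hne'
      omega
    · rw [if_neg (by omega), if_neg (by omega)]
      apply cnt_le_cnt
      intro j hj1 hjc hv
      have hne : pent M' (r+1) j ≠ 0 := by omega
      have := hM'.2 r (r+1) j h1 (by omega) hne
      omega

lemma toPPval_succ_c (hM : Tab M) (hE : SuppEq M M') {r s : ℕ}
    (h1 : 1 ≤ r) (h3 : 1 ≤ s) :
    toPPval M M' r (s+1) ≤ toPPval M M' r s := by
  unfold toPPval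
  by_cases hs : s+1 ≤ r
  · rw [if_pos hs, if_pos (by omega)]
    apply cnt_le_cnt
    intro j hj1 hjc hv
    have hne : pent M (s+1) j ≠ 0 := by omega
    have := hM.2 s (s+1) j h3 (by omega) hne
    omega
  · push_neg at hs
    by_cases hs2 : s ≤ r
    · have hsr : s = r := by omega
      subst hsr
      rw [if_neg (by omega), if_pos (le_refl _)]
      apply cnt_le_cnt
      intro j hj1 hjc hv
      have hne' : pent M' s j ≠ 0 := by omega
      have hne : pent M s j ≠ 0 := fun h => hne' ((hE s j).mp h)
      omega
    · rw [if_neg (by omega), if_neg (by omega)]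
      exact cnt_anti _ _ (by omega)

lemma toPPval_anti_r (hM' : Tab M') (hE : SuppEq M M') {r r' s : ℕ}
    (h1 : 1 ≤ r) (hr : r ≤ r') (h3 : 1 ≤ s) :
    toPPval M M' r' s ≤ toPPval M M' r s := by
  induction r', hr using Nat.le_induction with
  | base => exact le_refl _
  | succ k hk ih => exact le_trans (toPPval_succ_r hM' hE (by omega) h3) ih

lemma toPPval_anti_c (hM : Tab M) (hE : SuppEq M M') {r s s' : ℕ}
    (h1 : 1 ≤ r) (hs : s ≤ s') (h3 : 1 ≤ s) :
    toPPval M M' r s' ≤ toPPval M M' r s := by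
  induction s', hs using Nat.le_induction with
  | base => exact le_refl _
  | succ k hk ih => exact le_trans (toPPval_succ_c hM hE h1 (by omega)) ih

lemma toPP_mem (hM : Tab M) (hM' : Tab M') (hE : SuppEq M M') :
    toPP M M' ∈ ppBox a b c := by
  rw [ppBox, Finset.mem_filter]
  refine ⟨Finset.mem_univ _, ?_, ?_⟩
  · intro i i' j hle
    show toPPval M M' ((i' : ℕ)+1) ((j : ℕ)+1) ≤ toPPval M M' ((i : ℕ)+1) ((j : ℕ)+1)
    exact toPPval_anti_r hM' hE (by omega) (Nat.add_le_add_right hle 1) (by omega)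
  · intro i j j' hle
    show toPPval M M' ((i : ℕ)+1) ((j' : ℕ)+1) ≤ toPPval M M' ((i : ℕ)+1) ((j : ℕ)+1)
    exact toPPval_anti_c hM hE (by omega) (Nat.add_le_add_right hle 1) (by omega)

/-! #### the inverse map -/

def dQ (π : Fin a → Fin b → Fin (c+1)) (i j : ℕ) : ℕ :=
  cnt (fun k => pent π (i+k-1) i) (a-i+1) j

def dT (π : Fin a → Fin b → Fin (c+1)) (i j : ℕ) : ℕ :=
  cnt (fun k => pent π i (i+k-1)) (b-i+1) j

def fromPP (π : Fin a → Fin b → Fin (c+1)) :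
    (Fin (min a b) → Fin c → Fin (a+1)) × (Fin (min a b) → Fin c → Fin (b+1)) :=
  (fun i j => ⟨dQ π ((i : ℕ)+1) ((j : ℕ)+1), by
      have h1 := cnt_le (fun k => pent π (((i : ℕ)+1)+k-1) ((i : ℕ)+1)) (a-((i : ℕ)+1)+1) ((j : ℕ)+1)
      have h2 : (i : ℕ) < min a b := i.isLt
      have h3 : min a b ≤ a := Nat.min_le_left a b
      show dQ π _ _ < a + 1
      unfold dQ
      omega⟩,
   fun i j => ⟨dT π ((i : ℕ)+1) ((j : ℕ)+1), by
      have h1 := cnt_le (fun k => pent π ((i : ℕ)+1) (((i : ℕ)+1)+k-1)) (b-((i : ℕ)+1)+1) ((j : ℕ)+1)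
      have h2 : (i : ℕ) < min a b := i.isLt
      have h3 : min a b ≤ b := Nat.min_le_right a b
      show dT π _ _ < b + 1
      unfold dT
      omega⟩)

variable {π : Fin a → Fin b → Fin (c+1)}

lemma pent_fromPP1 {i j : ℕ} (h1 : 1 ≤ i) (h2 : i ≤ min a b) (h3 : 1 ≤ j) (h4 : j ≤ c) :
    pent (fromPP π).1 i j = dQ π i j := by
  rw [pent_eq _ h1 h2 h3 h4]
  show dQ π ((i-1)+1) ((j-1)+1) = _
  congr 1 <;> omega

lemma pent_fromPP2 {i j : ℕ} (h1 : 1 ≤ i) (h2 : i ≤ min a b) (h3 : 1 ≤ j) (h4 : j ≤ c) :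
    pent (fromPP π).2 i j = dT π i j := by
  rw [pent_eq _ h1 h2 h3 h4]
  show dT π ((i-1)+1) ((j-1)+1) = _
  congr 1 <;> omega

lemma dQ_anti (hπ : IsPP a b c π) (i : ℕ) :
    ∀ ⦃k k' : ℕ⦄, 1 ≤ k → k ≤ k' → pent π (i+k'-1) i ≤ pent π (i+k-1) i := by
  intro k k' hk hkk'
  by_cases hz : pent π (i+k'-1) i = 0
  · rw [hz]; exact Nat.zero_le _
  · obtain ⟨hr1, hra, hc1, hcb⟩ := pent_range hz
    exact pent_anti_r hπ (by omega) (by omega)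

lemma dT_anti (hπ : IsPP a b c π) (i : ℕ) :
    ∀ ⦃k k' : ℕ⦄, 1 ≤ k → k ≤ k' → pent π i (i+k'-1) ≤ pent π i (i+k-1) := by
  intro k k' hk hkk'
  by_cases hz : pent π i (i+k'-1) = 0
  · rw [hz]; exact Nat.zero_le _
  · obtain ⟨hr1, hra, hc1, hcb⟩ := pent_range hz
    exact pent_anti_c hπ (by omega) (by omega)

lemma dQ_ne_zero (hπ : IsPP a b c π) {i j : ℕ} (h2 : i ≤ a) (h3 : 1 ≤ j) :
    dQ π i j ≠ 0 ↔ j ≤ pent π i i := by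
  unfold dQ
  have hiff := le_cnt_iff (dQ_anti hπ i) (le_refl 1) (by omega : 1 ≤ a-i+1) (v := j)
  rw [show i+1-1 = i by omega] at hiff
  omega

lemma dT_ne_zero (hπ : IsPP a b c π) {i j : ℕ} (h2 : i ≤ b) (h3 : 1 ≤ j) :
    dT π i j ≠ 0 ↔ j ≤ pent π i i := by
  unfold dT
  have hiff := le_cnt_iff (dT_anti hπ i) (le_refl 1) (by omega : 1 ≤ b-i+1) (v := j)
  rw [show i+1-1 = i by omega] at hiff
  omega

lemma fromPP_mem (hπ : IsPP a b c π) : (fromPP π) ∈ TabPairs a b c := by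
  rw [TabPairs, Finset.mem_filter]
  have hmina : min a b ≤ a := Nat.min_le_left a b
  have hminb : min a b ≤ b := Nat.min_le_right a b
  refine ⟨Finset.mem_univ _, ?_, ?_, ?_⟩
  · constructor
    · intro i j j' hj hjj'
      by_cases hz : pent (fromPP π).1 i j' = 0
      · rw [hz]; exact Nat.zero_le _
      · obtain ⟨hi1, him, hj'1, hj'c⟩ := pent_range hz
        rw [pent_fromPP1 hi1 him hj (by omega), pent_fromPP1 hi1 him hj'1 hj'c]
        unfold dQ
        exact cnt_anti _ _ hjj'
    · intro i i' j h1 hii' hz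
      obtain ⟨hi'1, hi'm, hj1, hjc⟩ := pent_range hz
      rw [pent_fromPP1 hi'1 hi'm hj1 hjc] at hz
      rw [pent_fromPP1 hi'1 hi'm hj1 hjc, pent_fromPP1 h1 (by omega) hj1 hjc]
      have hq'le : dQ π i' j ≤ a - i' + 1 := cnt_le _ _ _
      have hq'1 : 1 ≤ dQ π i' j := by omega
      have hi'a : i' ≤ a := by omega
      have h5 : j ≤ pent π (i'+(dQ π i' j)-1) i' :=
        (le_cnt_iff (dQ_anti hπ i') hq'1 (by omega)).mp (le_refl _)
      have h6 : j ≤ pent π (i+(dQ π i' j)) i := by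
        have hX : pent π (i'+(dQ π i' j)-1) i' ≤ pent π (i'+(dQ π i' j)-1) i :=
          pent_anti_c hπ (by omega) (by omega)
        have hY : pent π (i'+(dQ π i' j)-1) i ≤ pent π (i+(dQ π i' j)) i :=
          pent_anti_r hπ (by omega) (by omega)
        exact le_trans h5 (le_trans hX hY)
      have h7 : dQ π i' j + 1 ≤ dQ π i j := by
        apply (le_cnt_iff (dQ_anti hπ i) (by omega) (by omega : dQ π i' j + 1 ≤ a-i+1)).mpr
        rwa [show i+(dQ π i' j+1)-1 = i+(dQ π i' j) by omega]
      omega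
  · constructor
    · intro i j j' hj hjj'
      by_cases hz : pent (fromPP π).2 i j' = 0
      · rw [hz]; exact Nat.zero_le _
      · obtain ⟨hi1, him, hj'1, hj'c⟩ := pent_range hz
        rw [pent_fromPP2 hi1 him hj (by omega), pent_fromPP2 hi1 him hj'1 hj'c]
        unfold dT
        exact cnt_anti _ _ hjj'
    · intro i i' j h1 hii' hz
      obtain ⟨hi'1, hi'm, hj1, hjc⟩ := pent_range hz
      rw [pent_fromPP2 hi'1 hi'm hj1 hjc] at hz
      rw [pent_fromPP2 hi'1 hi'm hj1 hjc, pent_fromPP2 h1 (by omega) hj1 hjc]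
      have hq'le : dT π i' j ≤ b - i' + 1 := cnt_le _ _ _
      have hq'1 : 1 ≤ dT π i' j := by omega
      have hi'b : i' ≤ b := by omega
      have h5 : j ≤ pent π i' (i'+(dT π i' j)-1) :=
        (le_cnt_iff (dT_anti hπ i') hq'1 (by omega)).mp (le_refl _)
      have h6 : j ≤ pent π i (i+(dT π i' j)) := by
        have hX : pent π i' (i'+(dT π i' j)-1) ≤ pent π i (i'+(dT π i' j)-1) :=
          pent_anti_r hπ (by omega) (by omega)
        have hY : pent π i (i'+(dT π i' j)-1) ≤ pent π i (i+(dT π i' j)) :=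
          pent_anti_c hπ (by omega) (by omega)
        exact le_trans h5 (le_trans hX hY)
      have h7 : dT π i' j + 1 ≤ dT π i j := by
        apply (le_cnt_iff (dT_anti hπ i) (by omega) (by omega : dT π i' j + 1 ≤ b-i+1)).mpr
        rwa [show i+(dT π i' j+1)-1 = i+(dT π i' j) by omega]
      omega
  · intro i j
    by_cases hr : 1 ≤ i ∧ i ≤ min a b ∧ 1 ≤ j ∧ j ≤ c
    · obtain ⟨h1, h2, h3, h4⟩ := hr
      rw [pent_fromPP1 h1 h2 h3 h4, pent_fromPP2 h1 h2 h3 h4]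
      have e1 := dQ_ne_zero hπ (i := i) (j := j) (by omega) h3
      have e2 := dT_ne_zero hπ (i := i) (j := j) (by omega) h3
      constructor
      · intro h
        by_contra h'
        exact (by omega : ¬ j ≤ pent π i i) (e2.mp h')
      · intro h
        by_contra h'
        exact (by omega : ¬ j ≤ pent π i i) (e1.mp h')
    · rw [pent_zero_out _ hr, pent_zero_out _ hr]

end Bij

section Bij2

variable {a b c : ℕ}
variable {M : Fin (min a b) → Fin c → Fin (a+1)} {M' : Fin (min a b) → Fin c → Fin (b+1)}
variable {π : Fin a → Fin b → Fin (c+1)}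

lemma cnt_suppEq (hE : SuppEq M M') (s : ℕ) :
    cnt (fun j => pent M s j) c 1 = cnt (fun j => pent M' s j) c 1 := by
  apply le_antisymm
  · apply cnt_le_cnt
    intro j _ _ hv
    by_contra h'
    have h0 : pent M' s j = 0 := by omega
    have := (hE s j).mpr h0
    omega
  · apply cnt_le_cnt
    intro j _ _ hv
    by_contra h'
    have h0 : pent M s j = 0 := by omega
    have := (hE s j).mp h0
    omega

lemma rt1 (hM : Tab M) (hM' : Tab M') (hE : SuppEq M M') :
    fromPP (toPP M M') = (M, M') := by
  have hmina : min a b ≤ a := Nat.min_le_left a b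
  have hminb : min a b ≤ b := Nat.min_le_right a b
  have hpair : fromPP (toPP M M') = ((fromPP (toPP M M')).1, (fromPP (toPP M M')).2) := rfl
  rw [hpair]
  congr 1
  · funext i j
    apply Fin.ext
    show dQ (toPP M M') ((i : ℕ)+1) ((j : ℕ)+1) = (M i j : ℕ)
    have him : (i : ℕ)+1 ≤ min a b := i.isLt
    have hjc : (j : ℕ)+1 ≤ c := j.isLt
    unfold dQ
    rw [cnt_congr (g' := fun k => cnt (fun v => pent M ((i : ℕ)+1) v) c k) ?_]
    · rw [cnt_cnt (fun v v' h1 h2 => hM.1 ((i : ℕ)+1) v v' h1 h2) (by omega) hjc ?_]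
      · exact pent_mk M i j
      · rcases tab_bound hM (i := (i : ℕ)+1) (j := (j : ℕ)+1) (by omega) with h | h <;> omega
    · intro k hk1 hkN
      rw [pent_toPP (by omega) (by omega) (by omega) (by omega)]
      unfold toPPval
      rw [if_pos (by omega)]
      congr 1
      omega
  · funext i j
    apply Fin.ext
    show dT (toPP M M') ((i : ℕ)+1) ((j : ℕ)+1) = (M' i j : ℕ)
    have him : (i : ℕ)+1 ≤ min a b := i.isLt
    have hjc : (j : ℕ)+1 ≤ c := j.isLt
    unfold dT
    rw [cnt_congr (g' := fun k => cnt (fun v => pent M' ((i : ℕ)+1) v) c k) ?_]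
    · rw [cnt_cnt (fun v v' h1 h2 => hM'.1 ((i : ℕ)+1) v v' h1 h2) (by omega) hjc ?_]
      · exact pent_mk M' i j
      · rcases tab_bound hM' (i := (i : ℕ)+1) (j := (j : ℕ)+1) (by omega) with h | h <;> omega
    · intro k hk1 hkN
      rw [pent_toPP (by omega) (by omega) (by omega) (by omega)]
      unfold toPPval
      rcases Nat.eq_or_lt_of_le hk1 with hk | hk
      · subst hk
        rw [if_pos (by omega), show (i : ℕ)+1+1-1 = (i : ℕ)+1 by omega,
          show ((i : ℕ)+1) - ((i : ℕ)+1) + 1 = 1 by omega]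
        exact cnt_suppEq hE _
      · rw [if_neg (by omega)]
        congr 1
        omega

lemma rt2 (hπ : IsPP a b c π) : (fun P => toPP P.1 P.2) (fromPP π) = π := by
  have hmina : min a b ≤ a := Nat.min_le_left a b
  have hminb : min a b ≤ b := Nat.min_le_right a b
  funext r s
  apply Fin.ext
  show toPPval (fromPP π).1 (fromPP π).2 ((r : ℕ)+1) ((s : ℕ)+1) = (π r s : ℕ)
  have hra : (r : ℕ)+1 ≤ a := r.isLt
  have hsb : (s : ℕ)+1 ≤ b := s.isLt
  unfold toPPval
  by_cases hc : (s : ℕ)+1 ≤ (r : ℕ)+1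
  · rw [if_pos hc]
    rw [cnt_congr (g' := fun j => cnt (fun k => pent π (((s : ℕ)+1)+k-1) ((s : ℕ)+1)) (a-((s : ℕ)+1)+1) j) ?_]
    · rw [cnt_cnt (dQ_anti hπ ((s : ℕ)+1)) (by omega) (by omega) (pent_le π _ _)]
      rw [show ((s : ℕ)+1) + (((r : ℕ)+1) - ((s : ℕ)+1) + 1) - 1 = (r : ℕ)+1 by omega]
      exact pent_mk π r s
    · intro j hj1 hjc
      exact pent_fromPP1 (by omega) (by omega : (s : ℕ)+1 ≤ min a b) hj1 hjc
  · rw [if_neg hc]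
    rw [cnt_congr (g' := fun j => cnt (fun k => pent π ((r : ℕ)+1) (((r : ℕ)+1)+k-1)) (b-((r : ℕ)+1)+1) j) ?_]
    · rw [cnt_cnt (dT_anti hπ ((r : ℕ)+1)) (by omega) (by omega) (pent_le π _ _)]
      rw [show ((r : ℕ)+1) + (((s : ℕ)+1) - ((r : ℕ)+1) + 1) - 1 = (s : ℕ)+1 by omega]
      exact pent_mk π r s
    · intro j hj1 hjc
      exact pent_fromPP2 (by omega) (by omega : (r : ℕ)+1 ≤ min a b) hj1 hjc

end Bij2

section Weights

variable {a b c : ℕ}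
variable {M : Fin (min a b) → Fin c → Fin (a+1)} {M' : Fin (min a b) → Fin c → Fin (b+1)}

lemma sum_Icc_shift (f : ℕ → ℕ) (s p : ℕ) (hs : 1 ≤ s) :
    ∑ r ∈ Icc s p, f r = ∑ k ∈ Icc 1 (p+1-s), f (s+k-1) := by
  rw [← Finset.Ico_add_one_right_eq_Icc, Finset.sum_Ico_eq_sum_range, sum_Icc_one]
  apply Finset.sum_congr rfl
  intro i _
  congr 1 <;> omega

lemma cnt_one_eq_sum_min (g : ℕ → ℕ) (N : ℕ) :
    cnt g N 1 = ∑ j ∈ Icc 1 N, min (g j) 1 := by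
  unfold cnt
  rw [Finset.card_filter]
  apply Finset.sum_congr rfl
  intro j _
  split <;> omega

lemma sum_drop {f : ℕ → ℕ} {m p : ℕ} (hmp : m ≤ p) (hz : ∀ i, m < i → i ≤ p → f i = 0) :
    ∑ i ∈ Icc 1 p, f i = ∑ i ∈ Icc 1 m, f i := by
  symm
  apply Finset.sum_subset (Finset.Icc_subset_Icc le_rfl hmp)
  intro x hx hnx
  simp only [mem_Icc] at hx hnx
  exact hz x (by omega) (by omega)

lemma tr_toPP : ppTr (toPP M M') = sCard M := by
  unfold ppTr sCard
  apply Finset.sum_congr rfl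
  intro i hi
  simp only [mem_Icc] at hi
  rw [pent_toPP (by omega) (by omega) (by omega) (by omega)]
  unfold toPPval
  rw [if_pos (le_refl _), show i - i + 1 = 1 by omega]
  exact cnt_one_eq_sum_min _ _

lemma claimA (hM : Tab M) {s : ℕ} (hs1 : 1 ≤ s) (hsb : s ≤ b) :
    ∑ r ∈ Icc 1 a, (if s ≤ r then pent (toPP M M') r s else 0)
      = ∑ j ∈ Icc 1 c, pent M s j := by
  by_cases hsa : s ≤ a
  · rw [← Finset.sum_filter]
    have hfil : (Icc 1 a).filter (fun r => s ≤ r) = Icc s a := by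
      ext x
      simp only [mem_filter, mem_Icc]
      omega
    rw [hfil, sum_Icc_shift _ s a hs1]
    have hpt : ∀ k ∈ Icc 1 (a+1-s), pent (toPP M M') (s+k-1) s
        = cnt (fun j => pent M s j) c k := by
      intro k hk
      simp only [mem_Icc] at hk
      rw [pent_toPP (by omega) (by omega) hs1 hsb]
      unfold toPPval
      rw [if_pos (by omega), show s+k-1-s+1 = k by omega]
    rw [Finset.sum_congr rfl hpt]
    rw [show a+1-s = a-s+1 by omega]
    apply sum_cnt
    intro j hj1 hjc
    rcases tab_bound hM (i := s) (j := j) hs1 with h | h <;> omega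
  · have hL : ∀ r ∈ Icc 1 a, (if s ≤ r then pent (toPP M M') r s else 0) = 0 := by
      intro r hr
      simp only [mem_Icc] at hr
      rw [if_neg (by omega)]
    have hR : ∀ j ∈ Icc 1 c, pent M s j = 0 := by
      intro j _
      apply pent_zero_out
      have : min a b ≤ a := Nat.min_le_left a b
      omega
    rw [Finset.sum_congr rfl hL, Finset.sum_congr rfl hR]
    simp

lemma claimB (hM' : Tab M') {r : ℕ} (hr1 : 1 ≤ r) (hra : r ≤ a) :
    (∑ s ∈ Icc 1 b, (if s ≤ r then 0 else pent (toPP M M') r s))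
      + ∑ j ∈ Icc 1 c, min (pent M' r j) 1
      = ∑ j ∈ Icc 1 c, pent M' r j := by
  by_cases hrb : r ≤ b
  · have hfirst : (∑ s ∈ Icc 1 b, (if s ≤ r then 0 else pent (toPP M M') r s))
        = ∑ k ∈ Icc 1 (b-r), cnt (fun j => pent M' r j) c (k+1) := by
      have hpt : ∀ s ∈ Icc 1 b, (if s ≤ r then 0 else pent (toPP M M') r s)
          = (if r+1 ≤ s then pent (toPP M M') r s else 0) := by
        intro s _
        by_cases h : s ≤ r
        · rw [if_pos h, if_neg (by omega)]
        · rw [if_neg h, if_pos (by omega)]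
      rw [Finset.sum_congr rfl hpt, ← Finset.sum_filter]
      have hfil : (Icc 1 b).filter (fun s => r+1 ≤ s) = Icc (r+1) b := by
        ext x
        simp only [mem_filter, mem_Icc]
        omega
      rw [hfil, sum_Icc_shift _ (r+1) b (by omega)]
      rw [show b+1-(r+1) = b-r by omega]
      apply Finset.sum_congr rfl
      intro k hk
      simp only [mem_Icc] at hk
      rw [show r+1+k-1 = r+k by omega, pent_toPP hr1 hra (by omega) (by omega)]
      unfold toPPval
      rw [if_neg (by omega), show r+k-r+1 = k+1 by omega]
    have hsecond : (∑ j ∈ Icc 1 c, min (pent M' r j) 1)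
        = cnt (fun j => pent M' r j) c 1 := (cnt_one_eq_sum_min _ _).symm
    have htotal : ∑ v ∈ Icc 1 (b-r+1), cnt (fun j => pent M' r j) c v
        = ∑ j ∈ Icc 1 c, pent M' r j := by
      apply sum_cnt
      intro j hj1 hjc
      rcases tab_bound hM' (i := r) (j := j) hr1 with h | h <;> omega
    have hins : Icc 1 (b-r+1) = insert 1 (Icc 2 (b-r+1)) := by
      ext x
      simp only [mem_insert, mem_Icc]
      omega
    have hshift2 : ∑ v ∈ Icc 2 (b-r+1), cnt (fun j => pent M' r j) c v
        = ∑ k ∈ Icc 1 (b-r), cnt (fun j => pent M' r j) c (k+1) := by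
      rw [sum_Icc_shift _ 2 (b-r+1) (by omega), show b-r+1+1-2 = b-r by omega]
      apply Finset.sum_congr rfl
      intro k _
      congr 1
      omega
    rw [hins, Finset.sum_insert (by simp [mem_Icc])] at htotal
    rw [hshift2] at htotal
    rw [hfirst, hsecond]
    omega
  · have hL : ∀ s ∈ Icc 1 b, (if s ≤ r then 0 else pent (toPP M M') r s) = 0 := by
      intro s hs
      simp only [mem_Icc] at hs
      rw [if_pos (by omega)]
    have hR : ∀ j ∈ Icc 1 c, pent M' r j = 0 := by
      intro j _
      apply pent_zero_out
      have : min a b ≤ b := Nat.min_le_right a b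
      omega
    rw [Finset.sum_congr rfl hL, Finset.sum_congr rfl hR]
    have : ∀ j ∈ Icc 1 c, min (pent M' r j) 1 = min 0 1 := by
      intro j hj
      rw [hR j hj]
    rw [Finset.sum_congr rfl this]
    simp

lemma vol_Icc (π : Fin a → Fin b → Fin (c+1)) :
    ppVol π = ∑ r ∈ Icc 1 a, ∑ s ∈ Icc 1 b, pent π r s := by
  unfold ppVol
  have h1 : ∀ i : Fin a, ∑ j : Fin b, (π i j : ℕ)
      = ∑ j ∈ range b, pent π ((i : ℕ)+1) (j+1) := by
    intro i
    rw [← Fin.sum_univ_eq_sum_range (fun j => pent π ((i : ℕ)+1) (j+1)) b]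
    exact Finset.sum_congr rfl (fun j _ => (pent_mk π i j).symm)
  calc ∑ i : Fin a, ∑ j : Fin b, (π i j : ℕ)
      = ∑ i : Fin a, ∑ j ∈ range b, pent π ((i : ℕ)+1) (j+1) :=
        Finset.sum_congr rfl (fun i _ => h1 i)
    _ = ∑ i ∈ range a, ∑ j ∈ range b, pent π (i+1) (j+1) :=
        Fin.sum_univ_eq_sum_range (fun i => ∑ j ∈ range b, pent π (i+1) (j+1)) a
    _ = ∑ r ∈ Icc 1 a, ∑ s ∈ Icc 1 b, pent π r s := by
        rw [sum_Icc_one (fun r => ∑ s ∈ Icc 1 b, pent π r s) a]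
        exact Finset.sum_congr rfl (fun i _ => (sum_Icc_one (fun s => pent π (i+1) s) b).symm)

lemma suppEq_sCard (hE : SuppEq M M') : sCard M = sCard M' := by
  unfold sCard
  apply Finset.sum_congr rfl
  intro i _
  apply Finset.sum_congr rfl
  intro j _
  have := hE i j
  omega

lemma vol_toPP (hM : Tab M) (hM' : Tab M') (hE : SuppEq M M') :
    ppVol (toPP M M') + sCard M' = eSum M + eSum M' := by
  have hmina : min a b ≤ a := Nat.min_le_left a b
  have hminb : min a b ≤ b := Nat.min_le_right a b
  have h1 : ppVol (toPP M M')
      = (∑ r ∈ Icc 1 a, ∑ s ∈ Icc 1 b, (if s ≤ r then pent (toPP M M') r s else 0))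
        + ∑ r ∈ Icc 1 a, ∑ s ∈ Icc 1 b, (if s ≤ r then 0 else pent (toPP M M') r s) := by
    rw [vol_Icc, ← Finset.sum_add_distrib]
    apply Finset.sum_congr rfl
    intro r _
    rw [← Finset.sum_add_distrib]
    apply Finset.sum_congr rfl
    intro s _
    by_cases h : s ≤ r <;> simp [h]
  have hA : (∑ r ∈ Icc 1 a, ∑ s ∈ Icc 1 b, (if s ≤ r then pent (toPP M M') r s else 0))
      = eSum M := by
    rw [Finset.sum_comm]
    have := fun s (hs : s ∈ Icc 1 b) => by
      simp only [mem_Icc] at hs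
      exact claimA hM (M' := M') hs.1 hs.2
    rw [Finset.sum_congr rfl this]
    unfold eSum
    apply sum_drop hminb
    intro i hi _
    apply Finset.sum_eq_zero
    intro j _
    exact pent_zero_out _ (by omega)
  have hC : sCard M' = ∑ r ∈ Icc 1 a, ∑ j ∈ Icc 1 c, min (pent M' r j) 1 := by
    unfold sCard
    symm
    apply sum_drop hmina
    intro i hi _
    apply Finset.sum_eq_zero
    intro j _
    rw [pent_zero_out _ (by omega)]
    omega
  have hB : (∑ r ∈ Icc 1 a, ∑ s ∈ Icc 1 b, (if s ≤ r then 0 else pent (toPP M M') r s))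
        + ∑ r ∈ Icc 1 a, ∑ j ∈ Icc 1 c, min (pent M' r j) 1
      = eSum M' := by
    rw [← Finset.sum_add_distrib]
    have := fun r (hr : r ∈ Icc 1 a) => by
      simp only [mem_Icc] at hr
      exact claimB (M := M) hM' hr.1 hr.2
    rw [Finset.sum_congr rfl this]
    unfold eSum
    apply sum_drop hmina
    intro i hi _
    apply Finset.sum_eq_zero
    intro j _
    exact pent_zero_out _ (by omega)
  omega

end Weights

end S13


/-- For all positive integers `a, b, c`, as polynomials in `q = X 0`, `t = X 1`:
`Σ_{λ ∈ P(min(a,b),c)} s_λ(q,…,q^a) s_λ(t,tq,…,tq^{b-1})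
  = Σ_{π ∈ PP(a,b,c)} q^{|π|} t^{tr(π)}`. -/
theorem statement13 (a b c : ℕ) (ha : 0 < a) (hb : 0 < b) (hc : 0 < c) :
    ∑ᶠ (μ : YoungDiagram) (_ : μ.colLen 0 ≤ min a b ∧ μ.rowLen 0 ≤ c),
        schur a μ (fun i => (MvPolynomial.X 0 : MvPolynomial (Fin 2) ℤ) ^ i) *
          schur b μ (fun j => MvPolynomial.X 1 * MvPolynomial.X 0 ^ (j - 1))
      = ∑ π ∈ ppBox a b c,
          (MvPolynomial.X 0 : MvPolynomial (Fin 2) ℤ) ^ ppVol π *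
            MvPolynomial.X 1 ^ ppTr π := by
  rw [S13.lhs_eq a b c ha hb]
  apply Finset.sum_nbij' (i := fun P => S13.toPP P.1 P.2) (j := S13.fromPP)
  · intro P hP
    rw [S13.TabPairs, Finset.mem_filter] at hP
    exact S13.toPP_mem hP.2.1 hP.2.2.1 hP.2.2.2
  · intro π hπ
    rw [ppBox, Finset.mem_filter] at hπ
    exact S13.fromPP_mem hπ.2
  · intro P hP
    rw [S13.TabPairs, Finset.mem_filter] at hP
    exact S13.rt1 hP.2.1 hP.2.2.1 hP.2.2.2
  · intro π hπ
    rw [ppBox, Finset.mem_filter] at hπ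
    exact S13.rt2 hπ.2
  · intro P hP
    rw [S13.TabPairs, Finset.mem_filter] at hP
    obtain ⟨-, hM, hM', hE⟩ := hP
    have h1 := S13.vol_toPP hM hM' hE
    have h2 : ppTr (S13.toPP P.1 P.2) = S13.sCard P.1 := S13.tr_toPP
    have h3 := S13.eSum_eq_rSum_add_sCard P.2
    have h4 : S13.sCard P.1 = S13.sCard P.2 := S13.suppEq_sCard hE
    have hexp : S13.eSum P.1 + S13.rSum P.2 = ppVol (S13.toPP P.1 P.2) := by omega
    rw [h2, h4, ← hexp, pow_add]
    ring
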